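/- For the sphere 4-vector V₄ = P₁∧P₂∧P₃∧P₄ of four conformal points on a sphere of radius r with i_s = −(V₄∧n)N ≠ 0, one has r² = V₄²/(V₄∧n)² and the conformal center satisfies C = (1/2)r²n + V₄/(−V₄∧n). -/

import Mathlib

noncomputable section
open scoped RealInnerProductSpace

/-- Euclidean 3-space. -/
abbrev E3 : Type := EuclideanSpace ℝ (Fin 3)

/-- The 5-dimensional space ℝ^{4,1}: Euclidean part plus coefficients of the
null vectors n (infinity) and n̄ (origin). -/
abbrev V5 : Type := E3 × ℝ × ℝ

/-- Symmetric bilinear form of signature (4,1):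
`⟪p,q⟫` on the Euclidean part, and `n·n̄ = -1` on the null pair. -/
def B5 : LinearMap.BilinForm ℝ V5 := LinearMap.mk₂ ℝ
  (fun x y => ⟪x.1, y.1⟫ - x.2.1 * y.2.2 - x.2.2 * y.2.1)
  (fun m₁ m₂ y => by simp only [Prod.fst_add, Prod.snd_add, inner_add_left]; ring)
  (fun c m y => by simp only [Prod.smul_fst, Prod.smul_snd, smul_eq_mul, real_inner_smul_left]; ring)
  (fun m y₁ y₂ => by simp only [Prod.fst_add, Prod.snd_add, inner_add_right]; ring)
  (fun c m y => by simp only [Prod.smul_fst, Prod.smul_snd, smul_eq_mul, real_inner_smul_right]; ring)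

/-- The quadratic form of R_{4,1}. -/
def Q5 : QuadraticForm ℝ V5 := B5.toQuadraticMap

/-- The Clifford geometric algebra R_{4,1}. -/
abbrev Cl : Type := CliffordAlgebra Q5

def ι5 : V5 →ₗ[ℝ] Cl := CliffordAlgebra.ι Q5

/-- Embedding of a Euclidean vector as a grade-1 element. -/
def ev (p : E3) : Cl := ι5 (p, 0, 0)

/-- The null vector n representing infinity. -/
def nInf : Cl := ι5 (0, 1, 0)

/-- The null vector n̄ representing the origin. -/
def nOri : Cl := ι5 (0, 0, 1)

/-- The conformal point P = p + (1/2)p² n + n̄. -/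
def cpt (p : E3) : Cl := ι5 (p, ⟪p, p⟫ / 2, 1)

/-- Outer (wedge) product of two vectors (grade-1 elements): antisymmetrized
geometric product. -/
def w2 (a b : Cl) : Cl := (2:ℝ)⁻¹ • (a * b - b * a)

/-- Outer (wedge) product of three vectors. -/
def w3 (a b c : Cl) : Cl := (6:ℝ)⁻¹ •
  (a*b*c - a*c*b - b*a*c + b*c*a + c*a*b - c*b*a)

/-- Outer (wedge) product of a vector with a bivector. -/
def vwB (v B : Cl) : Cl := (2:ℝ)⁻¹ • (v * B + B * v)

/-- Left contraction of a vector into a bivector. -/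
def lcontr (v B : Cl) : Cl := (2:ℝ)⁻¹ • (v * B - B * v)

/-- The Minkowski plane bivector N = n ∧ n̄. -/
def Nb : Cl := w2 nInf nOri

/-- Outer (wedge) product of four vectors. -/
def w4 (a b c d : Cl) : Cl := (24:ℝ)⁻¹ •
  (a*b*c*d - a*b*d*c - a*c*b*d + a*c*d*b + a*d*b*c - a*d*c*b - b*a*c*d + b*a*d*c + b*c*a*d - b*c*d*a - b*d*a*c + b*d*c*a + c*a*b*d - c*a*d*b - c*b*a*d + c*b*d*a + c*d*a*b - c*d*b*a - d*a*b*c + d*a*c*b + d*b*a*c - d*b*c*a - d*c*a*b + d*c*b*a)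

/-- Outer product of a 4-vector with a vector (grade 4 ∧ grade 1). -/
def fwv (A v : Cl) : Cl := (2:ℝ)⁻¹ • (A * v + v * A)

section AuxSRC

/-- 24-term antisymmetrizer. -/
def X4 (a b c d : Cl) : Cl :=
  a*b*c*d - a*b*d*c - a*c*b*d + a*c*d*b + a*d*b*c - a*d*c*b - b*a*c*d + b*a*d*c + b*c*a*d - b*c*d*a - b*d*a*c + b*d*c*a + c*a*b*d - c*a*d*b - c*b*a*d + c*b*d*a + c*d*a*b - c*d*b*a - d*a*b*c + d*a*c*b + d*b*a*c - d*b*c*a - d*c*a*b + d*c*b*a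

def X3 (a b c : Cl) : Cl := a*b*c - a*c*b - b*a*c + b*c*a + c*a*b - c*b*a

lemma w3_eq_X3 (a b c : Cl) : w3 a b c = (6:ℝ)⁻¹ • X3 a b c := rfl
lemma w4_eq_X4 (a b c d : Cl) : w4 a b c d = (24:ℝ)⁻¹ • X4 a b c d := rfl

lemma X4_subnorm (a b c d : Cl) : X4 a (b-a) (c-a) (d-a) = X4 a b c d := by
  simp only [X4]; noncomm_ring

lemma X4_alt12 (a c d : Cl) : X4 a a c d = 0 := by simp only [X4]; noncomm_ring
lemma X4_alt13 (a b d : Cl) : X4 a b a d = 0 := by simp only [X4]; noncomm_ring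
lemma X4_alt14 (a b c : Cl) : X4 a b c a = 0 := by simp only [X4]; noncomm_ring
lemma X4_alt23 (a b d : Cl) : X4 a b b d = 0 := by simp only [X4]; noncomm_ring
lemma X4_alt24 (a b c : Cl) : X4 a b c b = 0 := by simp only [X4]; noncomm_ring
lemma X4_alt34 (a b c : Cl) : X4 a b c c = 0 := by simp only [X4]; noncomm_ring

lemma X3_alt12 (a c : Cl) : X3 a a c = 0 := by simp only [X3]; noncomm_ring
lemma X3_alt13 (a b : Cl) : X3 a b a = 0 := by simp only [X3]; noncomm_ring
lemma X3_alt23 (a b : Cl) : X3 a b b = 0 := by simp only [X3]; noncomm_ring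

lemma X3_swap12 (a b c : Cl) : X3 b a c = -X3 a b c := by simp only [X3]; noncomm_ring
lemma X3_swap23 (a b c : Cl) : X3 a c b = -X3 a b c := by simp only [X3]; noncomm_ring
lemma X3_swap13 (a b c : Cl) : X3 c b a = -X3 a b c := by simp only [X3]; noncomm_ring

lemma X4_add1 (a a' b c d : Cl) : X4 (a + a') b c d = X4 a b c d + X4 a' b c d := by
  simp only [X4]; noncomm_ring
lemma X4_add2 (a b b' c d : Cl) : X4 a (b + b') c d = X4 a b c d + X4 a b' c d := by
  simp only [X4]; noncomm_ring
lemma X4_add3 (a b c c' d : Cl) : X4 a b (c + c') d = X4 a b c d + X4 a b c' d := by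
  simp only [X4]; noncomm_ring
lemma X4_add4 (a b c d d' : Cl) : X4 a b c (d + d') = X4 a b c d + X4 a b c d' := by
  simp only [X4]; noncomm_ring

lemma X4_smul1 (t : ℝ) (a b c d : Cl) : X4 (t • a) b c d = t • X4 a b c d := by
  simp only [X4, smul_mul_assoc, mul_smul_comm, smul_sub, smul_add]
lemma X4_smul2 (t : ℝ) (a b c d : Cl) : X4 a (t • b) c d = t • X4 a b c d := by
  simp only [X4, smul_mul_assoc, mul_smul_comm, smul_sub, smul_add]
lemma X4_smul3 (t : ℝ) (a b c d : Cl) : X4 a b (t • c) d = t • X4 a b c d := by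
  simp only [X4, smul_mul_assoc, mul_smul_comm, smul_sub, smul_add]
lemma X4_smul4 (t : ℝ) (a b c d : Cl) : X4 a b c (t • d) = t • X4 a b c d := by
  simp only [X4, smul_mul_assoc, mul_smul_comm, smul_sub, smul_add]

lemma X3_add1 (a a' b c : Cl) : X3 (a + a') b c = X3 a b c + X3 a' b c := by
  simp only [X3]; noncomm_ring
lemma X3_add2 (a b b' c : Cl) : X3 a (b + b') c = X3 a b c + X3 a b' c := by
  simp only [X3]; noncomm_ring
lemma X3_add3 (a b c c' : Cl) : X3 a b (c + c') = X3 a b c + X3 a b c' := by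
  simp only [X3]; noncomm_ring
lemma X3_smul1 (t : ℝ) (a b c : Cl) : X3 (t • a) b c = t • X3 a b c := by
  simp only [X3, smul_mul_assoc, mul_smul_comm, smul_sub, smul_add]
lemma X3_smul2 (t : ℝ) (a b c : Cl) : X3 a (t • b) c = t • X3 a b c := by
  simp only [X3, smul_mul_assoc, mul_smul_comm, smul_sub, smul_add]
lemma X3_smul3 (t : ℝ) (a b c : Cl) : X3 a b (t • c) = t • X3 a b c := by
  simp only [X3, smul_mul_assoc, mul_smul_comm, smul_sub, smul_add]

/-- pull an anticommuting factor through. -/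
lemma pull {x y : Cl} (h : y * x = -(x * y)) (z : Cl) : y * (x * z) = -(x * (y * z)) := by
  rw [← mul_assoc, h, neg_mul, mul_assoc]

lemma X3_anti {a b c : Cl} (hab : b*a = -(a*b)) (hac : c*a = -(a*c)) (hbc : c*b = -(b*c)) :
    X3 a b c = (6:ℝ) • (a*(b*c)) := by
  simp only [X3, mul_assoc, hab, hac, hbc, pull hab, pull hac, pull hbc,
    mul_neg, neg_mul, neg_neg]
  module

lemma X4_antiHead {a b c d : Cl} (hb : b*a = -(a*b)) (hc : c*a = -(a*c)) (hd : d*a = -(a*d)) :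
    X4 a b c d = (4:ℝ) • (a * X3 b c d) := by
  simp only [X4, X3, mul_assoc, mul_sub, mul_add, hb, hc, hd, pull hb, pull hc, pull hd,
    mul_neg, neg_mul, neg_neg, smul_sub, smul_add]
  module

lemma ι5_sq (x : V5) : ι5 x * ι5 x = algebraMap ℝ Cl (B5 x x) := by
  rw [ι5, CliffordAlgebra.ι_sq_scalar]; rfl

lemma ι5_add_swap (x y : V5) :
    ι5 x * ι5 y + ι5 y * ι5 x = algebraMap ℝ Cl (B5 x y + B5 y x) := by
  rw [ι5, CliffordAlgebra.ι_mul_ι_add_swap]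
  congr 1
  exact LinearMap.BilinMap.polar_toQuadraticMap (B := B5) x y

lemma ι5_anticomm {x y : V5} (h : B5 x y = 0) (h' : B5 y x = 0) :
    ι5 y * ι5 x = -(ι5 x * ι5 y) := by
  have h2 := ι5_add_swap x y
  rw [h, h', add_zero, map_zero] at h2
  exact eq_neg_of_add_eq_zero_right h2

lemma anticomm_symm {a b : Cl} (h : a * b = -(b * a)) : b * a = -(a * b) := by
  rw [h, neg_neg]

lemma B5_apply (v w : E3) (a b a' b' : ℝ) :
    B5 (v,a,b) (w,a',b') = ⟪v,w⟫ - a*b' - b*a' := rfl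

/-- the auxiliary 3-space embedding (depends on the center c). -/
def gh (c v : E3) : Cl := ι5 (v, ⟪c, v⟫, 0)

lemma gh_add (c v w : E3) : gh c (v + w) = gh c v + gh c w := by
  rw [gh, gh, gh, ← map_add]
  congr 1
  simp [Prod.ext_iff, inner_add_right]

lemma gh_smul (c : E3) (t : ℝ) (v : E3) : gh c (t • v) = t • gh c v := by
  rw [gh, gh, ← map_smul]
  congr 1
  simp [Prod.ext_iff, inner_smul_right]

lemma gh_sub (c v w : E3) : gh c (v - w) = gh c v - gh c w := by
  rw [eq_sub_iff_add_eq, ← gh_add, sub_add_cancel]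

lemma gh_decomp (c v : E3) :
    gh c v = v 0 • gh c (EuclideanSpace.single 0 1) + v 1 • gh c (EuclideanSpace.single 1 1)
      + v 2 • gh c (EuclideanSpace.single 2 1) := by
  rw [← gh_smul, ← gh_smul, ← gh_smul, ← gh_add, ← gh_add]
  congr 1
  ext i
  fin_cases i <;> simp [EuclideanSpace.single_apply]

end AuxSRC

/-- radius and center extraction from the sphere 4-vector:
r² = V₄²/(V₄∧n)² and C = (1/2)r²n + V₄/(−V₄∧n). -/
theorem sphere_radius_center_extraction
    (c : E3) (r : ℝ)
    (r₁ r₂ r₃ r₄ : E3)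
    (h₁ : ‖r₁‖ = 1) (h₂ : ‖r₂‖ = 1) (h₃ : ‖r₃‖ = 1) (h₄ : ‖r₄‖ = 1)
    (p₁ p₂ p₃ p₄ : E3)
    (hp₁ : p₁ = c + r • r₁) (hp₂ : p₂ = c + r • r₂)
    (hp₃ : p₃ = c + r • r₃) (hp₄ : p₄ = c + r • r₄)
    (V₄ : Cl) (hV : V₄ = w4 (cpt p₁) (cpt p₂) (cpt p₃) (cpt p₄))
    (his : -(fwv V₄ nInf * Nb) ≠ 0) :
    ∃ s : ℝ, fwv V₄ nInf * fwv V₄ nInf = algebraMap ℝ Cl s ∧ s ≠ 0 ∧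
      V₄ * V₄ = algebraMap ℝ Cl (r ^ 2 * s) ∧
      cpt c = (2:ℝ)⁻¹ • (r ^ 2 • nInf)
        + s⁻¹ • (V₄ * (-(fwv V₄ nInf))) := by
  have hvdef : ∀ v : E3, gh c v = ι5 (v, ⟪c, v⟫, 0) := fun _ => rfl
  set hv : V5 := (c, (⟪c,c⟫ + r^2)/2, 1) with hhv
  set nv : V5 := ((0:E3), (1:ℝ), (0:ℝ)) with hnv
  have hnInf : nInf = ι5 nv := rfl
  set e0 : E3 := EuclideanSpace.single 0 1 with he0
  set e1 : E3 := EuclideanSpace.single 1 1 with he1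
  set e2 : E3 := EuclideanSpace.single 2 1 with he2
  set H : Cl := ι5 hv with hHd
  set G0 : Cl := gh c e0 with hG0
  set G1 : Cl := gh c e1 with hG1
  set G2 : Cl := gh c e2 with hG2
  -- bilinear form values
  have hBhg : ∀ v : E3, B5 hv (v, ⟪c,v⟫, 0) = 0 := by
    intro v; rw [B5_apply]; ring
  have hBgh : ∀ v : E3, B5 (v, ⟪c,v⟫, 0) hv = 0 := by
    intro v; rw [B5_apply, real_inner_comm]; ring
  have hBng : ∀ v : E3, B5 nv (v, ⟪c,v⟫, 0) = 0 := by
    intro v; rw [B5_apply]; simp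
  have hBgn : ∀ v : E3, B5 (v, ⟪c,v⟫, 0) nv = 0 := by
    intro v; rw [B5_apply]; simp
  have hBgg : ∀ v w : E3, B5 (v, ⟪c,v⟫, 0) (w, ⟪c,w⟫, 0) = ⟪v,w⟫ := by
    intro v w; rw [B5_apply]; ring
  have hee : ∀ i j : Fin 3, ⟪EuclideanSpace.single i (1:ℝ), EuclideanSpace.single j (1:ℝ)⟫
      = if i = j then 1 else 0 := by
    intro i j
    simp [EuclideanSpace.inner_single_left, EuclideanSpace.single_apply, eq_comm]
  -- generator relations
  have aHg : ∀ v : E3, gh c v * H = -(H * gh c v) := by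
    intro v; rw [hvdef, hHd]; exact ι5_anticomm (hBhg v) (hBgh v)
  have ang : ∀ v : E3, nInf * gh c v = -(gh c v * nInf) := by
    intro v; rw [hvdef, hnInf]; exact ι5_anticomm (hBgn v) (hBng v)
  have agg : ∀ v w : E3, ⟪v,w⟫ = 0 → gh c w * gh c v = -(gh c v * gh c w) := by
    intro v w hvw
    rw [hvdef, hvdef]
    refine ι5_anticomm ?_ ?_
    · rw [hBgg]; exact hvw
    · rw [hBgg, real_inner_comm]; exact hvw
  have gsq : ∀ v : E3, ⟪v,v⟫ = 1 → gh c v * gh c v = 1 := by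
    intro v hvv
    rw [hvdef, ι5_sq, hBgg, hvv, map_one]
  -- sorted relations
  have s10 : G1 * G0 = -(G0 * G1) := agg e0 e1 (by rw [he0, he1, hee]; simp)
  have s20 : G2 * G0 = -(G0 * G2) := agg e0 e2 (by rw [he0, he2, hee]; simp)
  have s21 : G2 * G1 = -(G1 * G2) := agg e1 e2 (by rw [he1, he2, hee]; simp)
  have sH0 : H * G0 = -(G0 * H) := anticomm_symm (aHg e0)
  have sH1 : H * G1 = -(G1 * H) := anticomm_symm (aHg e1)
  have sH2 : H * G2 = -(G2 * H) := anticomm_symm (aHg e2)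
  have sn0 : nInf * G0 = -(G0 * nInf) := ang e0
  have sn1 : nInf * G1 = -(G1 * nInf) := ang e1
  have sn2 : nInf * G2 = -(G2 * nInf) := ang e2
  have q0 : G0 * G0 = 1 := gsq e0 (by rw [he0, hee]; simp)
  have q1 : G1 * G1 = 1 := gsq e1 (by rw [he1, hee]; simp)
  have q2 : G2 * G2 = 1 := gsq e2 (by rw [he2, hee]; simp)
  have qH : H * H = (-(r^2)) • (1:Cl) := by
    rw [hHd, ι5_sq, B5_apply, Algebra.algebraMap_eq_smul_one]; congr 1; ring
  have qn : nInf * nInf = 0 := by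
    rw [hnInf, ι5_sq, B5_apply]
    simp
  have snH : nInf * H = (-2:ℝ) • (1:Cl) - H * nInf := by
    have h2 := ι5_add_swap nv hv
    rw [B5_apply, B5_apply] at h2
    simp only [inner_zero_left, inner_zero_right] at h2
    rw [hnInf, hHd] at *
    rw [eq_sub_iff_add_eq, ← Algebra.algebraMap_eq_smul_one]
    rw [h2]; congr 1; ring
  -- pulled versions
  have p10 := pull s10
  have p20 := pull s20
  have p21 := pull s21
  have pH0 := pull sH0
  have pH1 := pull sH1
  have pH2 := pull sH2
  have pn0 := pull sn0
  have pn1 := pull sn1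
  have pn2 := pull sn2
  have q0' : ∀ x : Cl, G0 * (G0 * x) = x := by
    intro x; rw [← mul_assoc, q0, one_mul]
  have q1' : ∀ x : Cl, G1 * (G1 * x) = x := by
    intro x; rw [← mul_assoc, q1, one_mul]
  have q2' : ∀ x : Cl, G2 * (G2 * x) = x := by
    intro x; rw [← mul_assoc, q2, one_mul]
  have qH' : ∀ x : Cl, H * (H * x) = (-(r^2)) • x := by
    intro x; rw [← mul_assoc, qH, smul_mul_assoc, one_mul]
  have qn' : ∀ x : Cl, nInf * (nInf * x) = 0 := by
    intro x; rw [← mul_assoc, qn, zero_mul]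
  have pnH : ∀ x : Cl, nInf * (H * x) = (-2:ℝ) • x - H * (nInf * x) := by
    intro x; rw [← mul_assoc, snH, sub_mul, smul_mul_assoc, one_mul, mul_assoc]
  have normset : True := trivial
  have f3 : (H*(G0*(G1*G2))) * (H*(G0*(G1*G2))) = algebraMap ℝ Cl (-(r^2)) := by
    simp only [mul_assoc, s10, s20, s21, sH0, sH1, sH2, sn0, sn1, sn2, snH,
      p10, p20, p21, pH0, pH1, pH2, pn0, pn1, pn2, pnH,
      q0, q1, q2, qH, qn, q0', q1', q2', qH', qn',
      mul_neg, neg_mul, neg_neg, mul_one, one_mul, mul_zero, zero_mul,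
      smul_mul_assoc, mul_smul_comm, smul_zero, sub_zero, zero_sub,
      Algebra.algebraMap_eq_smul_one]
    module
  have f1 : fwv (H*(G0*(G1*G2))) nInf = H*(G0*(G1*(G2*nInf))) - G0*(G1*G2) := by
    simp only [fwv, mul_assoc, s10, s20, s21, sH0, sH1, sH2, sn0, sn1, sn2, snH,
      p10, p20, p21, pH0, pH1, pH2, pn0, pn1, pn2, pnH,
      q0, q1, q2, qH, qn, q0', q1', q2', qH', qn',
      mul_neg, neg_mul, neg_neg, mul_one, one_mul, mul_zero, zero_mul,
      smul_mul_assoc, mul_smul_comm, smul_zero, sub_zero, zero_sub, sub_mul, mul_sub, smul_sub, smul_add, mul_add, add_mul,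
      Algebra.algebraMap_eq_smul_one]
    module
  have f2 : (H*(G0*(G1*(G2*nInf))) - G0*(G1*G2)) * (H*(G0*(G1*(G2*nInf))) - G0*(G1*G2))
      = algebraMap ℝ Cl (-1) := by
    simp only [fwv, mul_assoc, s10, s20, s21, sH0, sH1, sH2, sn0, sn1, sn2, snH,
      p10, p20, p21, pH0, pH1, pH2, pn0, pn1, pn2, pnH,
      q0, q1, q2, qH, qn, q0', q1', q2', qH', qn',
      mul_neg, neg_mul, neg_neg, mul_one, one_mul, mul_zero, zero_mul,
      smul_mul_assoc, mul_smul_comm, smul_zero, sub_zero, zero_sub, sub_mul, mul_sub, smul_sub, smul_add, mul_add, add_mul,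
      Algebra.algebraMap_eq_smul_one]
    module
  have f4 : (H*(G0*(G1*G2))) * (H*(G0*(G1*(G2*nInf))) - G0*(G1*G2))
      = (-(r^2)) • nInf + H := by
    simp only [fwv, mul_assoc, s10, s20, s21, sH0, sH1, sH2, sn0, sn1, sn2, snH,
      p10, p20, p21, pH0, pH1, pH2, pn0, pn1, pn2, pnH,
      q0, q1, q2, qH, qn, q0', q1', q2', qH', qn',
      mul_neg, neg_mul, neg_neg, mul_one, one_mul, mul_zero, zero_mul,
      smul_mul_assoc, mul_smul_comm, smul_zero, sub_zero, zero_sub, sub_mul, mul_sub, smul_sub, smul_add, mul_add, add_mul,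
      Algebra.algebraMap_eq_smul_one]
    module
  -- X3 values on generators
  have v012 : X3 G0 G1 G2 = (6:ℝ) • (G0*(G1*G2)) := X3_anti s10 s20 s21
  have v021 : X3 G0 G2 G1 = -((6:ℝ) • (G0*(G1*G2))) := by rw [X3_swap23, v012]
  have v102 : X3 G1 G0 G2 = -((6:ℝ) • (G0*(G1*G2))) := by rw [X3_swap12, v012]
  have v120 : X3 G1 G2 G0 = (6:ℝ) • (G0*(G1*G2)) := by rw [X3_swap13, v021, neg_neg]
  have v201 : X3 G2 G0 G1 = (6:ℝ) • (G0*(G1*G2)) := by rw [X3_swap13, v102, neg_neg]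
  have v210 : X3 G2 G1 G0 = -((6:ℝ) • (G0*(G1*G2))) := by rw [X3_swap13, v012]
  have hY : ∀ b cc d : E3, ∃ lam : ℝ, X3 (gh c b) (gh c cc) (gh c d) = lam • (G0*(G1*G2)) := by
    intro b cc d
    refine ⟨6*(b 0*(cc 1*d 2)) - 6*(b 0*(cc 2*d 1)) - 6*(b 1*(cc 0*d 2)) + 6*(b 1*(cc 2*d 0))
      + 6*(b 2*(cc 0*d 1)) - 6*(b 2*(cc 1*d 0)), ?_⟩
    rw [gh_decomp c b, gh_decomp c cc, gh_decomp c d]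
    simp only [← he0, ← he1, ← he2, ← hG0, ← hG1, ← hG2]
    simp only [X3_add1, X3_add2, X3_add3, X3_smul1, X3_smul2, X3_smul3,
      X3_alt12, X3_alt13, X3_alt23, smul_zero, add_zero, zero_add,
      v012, v021, v102, v120, v201, v210]
    module
  have hZ : ∀ a b cc d : E3, X4 (gh c a) (gh c b) (gh c cc) (gh c d) = 0 := by
    intro a b cc d
    rw [gh_decomp c a, gh_decomp c b, gh_decomp c cc, gh_decomp c d]
    simp only [X4_add1, X4_add2, X4_add3, X4_add4, X4_smul1, X4_smul2, X4_smul3, X4_smul4,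
      X4_alt12, X4_alt13, X4_alt14, X4_alt23, X4_alt24, X4_alt34,
      smul_zero, add_zero, zero_add]
  -- decomposing the conformal points
  have hcptk : ∀ (ρ p : E3), ‖ρ‖ = 1 → p = c + r • ρ → cpt p = r • gh c ρ + H := by
    intro ρ p hρ hp
    rw [cpt, hvdef, hHd, ← map_smul, ← map_add]
    congr 1
    have hρρ : ⟪ρ, ρ⟫ = 1 := by
      rw [real_inner_self_eq_norm_sq, hρ]; norm_num
    have hin : ⟪p, p⟫ = ⟪c,c⟫ + 2*(r*⟪c,ρ⟫) + r^2 := by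
      rw [hp]
      simp only [inner_add_left, inner_add_right, real_inner_smul_left, real_inner_smul_right,
        real_inner_comm ρ c, hρρ]
      ring
    refine Prod.ext ?_ (Prod.ext ?_ ?_)
    · simp [hp, add_comm, hhv]
    · simp only [Prod.smul_snd, Prod.fst_add, Prod.snd_add, Prod.smul_fst, smul_eq_mul, hin]
      ring
    · simp [hhv]
  have hc1 := hcptk r₁ p₁ h₁ hp₁
  have hc2 := hcptk r₂ p₂ h₂ hp₂
  have hc3 := hcptk r₃ p₃ h₃ hp₃
  have hc4 := hcptk r₄ p₄ h₄ hp₄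
  have hD : ∀ (ρ σ : E3), (r • gh c σ + H) - (r • gh c ρ + H) = r • gh c (σ - ρ) := by
    intro ρ σ; rw [gh_sub, smul_sub]; abel
  obtain ⟨lam, hlam⟩ := hY (r₂ - r₁) (r₃ - r₁) (r₄ - r₁)
  set α : ℝ := (1/6) * (r^3 * lam) with hα
  have hV4 : V₄ = α • (H*(G0*(G1*G2))) := by
    rw [hV, w4_eq_X4, hc1, hc2, hc3, hc4, ← X4_subnorm, hD r₁ r₂, hD r₁ r₃, hD r₁ r₄,
      X4_smul2, X4_smul3, X4_smul4, X4_add1, X4_smul1, hZ, smul_zero, zero_add,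
      X4_antiHead (aHg _) (aHg _) (aHg _), hlam, mul_smul_comm]
    rw [hα]
    module
  have hfwv : fwv V₄ nInf = α • (H*(G0*(G1*(G2*nInf))) - G0*(G1*G2)) := by
    have hl : fwv (α • (H*(G0*(G1*G2)))) nInf = α • fwv (H*(G0*(G1*G2))) nInf := by
      simp only [fwv, smul_mul_assoc, mul_smul_comm, smul_add]
      module
    rw [hV4, hl, f1]
  have hαne : α ≠ 0 := by
    intro h0
    apply his
    rw [hfwv, h0, zero_smul, zero_mul, neg_zero]
  have hsne : -(α^2) ≠ 0 := neg_ne_zero.mpr (pow_ne_zero 2 hαne)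
  refine ⟨-(α^2), ?_, hsne, ?_, ?_⟩
  · rw [hfwv, smul_mul_smul_comm, f2, Algebra.algebraMap_eq_smul_one, Algebra.algebraMap_eq_smul_one]
    module
  · rw [hV4, smul_mul_smul_comm, f3, Algebra.algebraMap_eq_smul_one, Algebra.algebraMap_eq_smul_one]
    module
  · have hprod : V₄ * -(fwv V₄ nInf) = (-(α^2)) • ((-(r^2)) • nInf + H) := by
      rw [hfwv, hV4, mul_neg, smul_mul_smul_comm, f4, ← neg_smul]
      module
    rw [hprod, inv_smul_smul₀ hsne]
    have hcc : cpt c = (-(r^2)/2) • nInf + H := by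
      rw [cpt, hnInf, hHd, ← map_smul, ← map_add]
      congr 1
      refine Prod.ext ?_ (Prod.ext ?_ ?_)
      · simp [hhv, hnv]
      · simp only [Prod.smul_snd, Prod.fst_add, Prod.snd_add, Prod.smul_fst, smul_eq_mul]
        ring
      · simp [hhv, hnv]
    rw [hcc]
    module
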